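/- Let (X,T) be a topological dynamical system, μ ∈ M(X,T), f ∈ L²(μ), and A = {a_i} a strictly increasing sequence of naturals. If f is μ-A-equicontinuous, then {f ∘ T^{a_n} : n ∈ ℕ} is pre-compact in L²(μ). -/

import Mathlib

open MeasureTheory Filter Topology
open scoped ENNReal NNReal

theorem stmt7 {X : Type*} [MetricSpace X] [CompactSpace X] [MeasurableSpace X]
    [BorelSpace X] (μ : Measure X) [IsProbabilityMeasure μ] (T : X ≃ₜ X)
    (hT : MeasurePreserving T μ μ) (f : X → ℝ) (hf : MemLp f 2 μ)
    (a : ℕ → ℕ) (ha : StrictMono a)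
    (heq : ∀ τ > (0 : ℝ), ∃ K : Set X, IsCompact K ∧
      μ K > ENNReal.ofReal (1 - τ) ∧ ∀ ε > (0 : ℝ), ∃ δ > (0 : ℝ),
      ∀ x ∈ K, ∀ y ∈ K, dist x y < δ →
        ∀ n : ℕ, |f ((⇑T)^[a n] x) - f ((⇑T)^[a n] y)| < ε) :
    ∀ ε > (0 : ℝ), ∃ F : Finset ℕ, ∀ n : ℕ, ∃ m ∈ F,
      eLpNorm (fun x => f ((⇑T)^[a n] x) - f ((⇑T)^[a m] x)) 2 μ
        < ENNReal.ofReal ε := by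
  intro ε hε
  set g : ℕ → X → ℝ := fun n x => f ((⇑T)^[a n] x) with hgdef
  -- basic measure-theoretic facts
  have hmp : ∀ k : ℕ, MeasurePreserving ((⇑T)^[k]) μ μ := fun k => hT.iterate k
  have hemb : ∀ k : ℕ, MeasurableEmbedding ((⇑T)^[k]) := by
    intro k
    induction k with
    | zero => simpa using MeasurableEmbedding.id
    | succ n ih =>
      rw [Function.iterate_succ']
      exact (T.toMeasurableEquiv.measurableEmbedding).comp ih
  have hTs : MeasurePreserving (⇑T.symm) μ μ := by
    have hT2 : MeasurePreserving (⇑T.toMeasurableEquiv) μ μ := by simpa using hT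
    simpa using hT2.symm
  have hmps : ∀ k : ℕ, MeasurePreserving ((⇑T.symm)^[k]) μ μ := fun k => hTs.iterate k
  have himg : ∀ (k : ℕ) (s : Set X), (⇑T)^[k] '' s = ((⇑T.symm)^[k]) ⁻¹' s := by
    intro k s
    refine congrFun (Set.image_eq_preimage_of_inverse ?_ ?_) s
    · exact Function.LeftInverse.iterate (fun x => T.symm_apply_apply x) k
    · exact Function.RightInverse.iterate (fun x => T.apply_symm_apply x) k
  have hgmem : ∀ n, MemLp (g n) 2 μ := fun n => hf.comp_measurePreserving (hmp (a n))
  have hgam : ∀ n, AEStronglyMeasurable (g n) μ := fun n => (hgmem n).aestronglyMeasurable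
  have hgint : ∀ n, Integrable (g n) μ := fun n => (hgmem n).integrable one_le_two
  set ε' : ℝ := ε / 8 with hε'def
  have hε' : 0 < ε' := by positivity
  -- small-measure control for f
  obtain ⟨δ₀, hδ₀pos, hδ₀⟩ := hf.eLpNorm_indicator_le one_le_two (by norm_num) hε'
  set τ : ℝ := min δ₀ 1 with hτdef
  have hτpos : 0 < τ := lt_min hδ₀pos one_pos
  have hτ1 : τ ≤ 1 := min_le_right _ _
  obtain ⟨K, hK, hKμ, hKeq⟩ := heq τ hτpos
  have hKmeas : MeasurableSet K := hK.isClosed.measurableSet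
  -- μ Kᶜ ≤ ofReal δ₀
  have hKc : μ Kᶜ ≤ ENNReal.ofReal δ₀ := by
    have h1 : μ Kᶜ = 1 - μ K := prob_compl_eq_one_sub hKmeas
    have h2 : (1 : ℝ≥0∞) - μ K ≤ 1 - ENNReal.ofReal (1 - τ) :=
      tsub_le_tsub_left hKμ.le 1
    have h3 : (1 : ℝ≥0∞) - ENNReal.ofReal (1 - τ) = ENNReal.ofReal τ := by
      have : ENNReal.ofReal (1 - τ) + ENNReal.ofReal τ = 1 := by
        rw [← ENNReal.ofReal_add (by linarith) hτpos.le]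
        norm_num
      rw [← this, ENNReal.add_sub_cancel_left ENNReal.ofReal_ne_top]
    calc μ Kᶜ ≤ 1 - ENNReal.ofReal (1 - τ) := h1 ▸ h2
      _ = ENNReal.ofReal τ := h3
      _ ≤ ENNReal.ofReal δ₀ := ENNReal.ofReal_le_ofReal (min_le_left _ _)
  -- equicontinuity data
  obtain ⟨δ, hδpos, hδK⟩ := hKeq ε' hε'
  -- finite cover of K by δ/2 balls centered in K
  obtain ⟨b', hb'K, hb'fin, hb'cov⟩ :=
    hK.elim_finite_subcover_image (ι := X) (b := K)
      (c := fun x => Metric.ball x (δ / 2)) (fun x _ => Metric.isOpen_ball)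
      (fun z hz => Set.mem_biUnion hz (Metric.mem_ball_self (by positivity)))
  haveI : Fintype ↥b' := hb'fin.fintype
  set B : X → Set X := fun x => Metric.ball x (δ / 2) ∩ K with hBdef
  have hBmeas : ∀ x, MeasurableSet (B x) := fun x =>
    Metric.isOpen_ball.measurableSet.inter hKmeas
  set C₁ : ℝ := ∫ x, |f x| ∂μ with hC₁def
  have hC₁ : ∀ n, ∫ x, |g n x| ∂μ = C₁ := fun n =>
    (hmp (a n)).integral_comp (hemb (a n)) (fun x => |f x|)
  have hC₁nn : ∀ n s, ∫ z in s, |g n z| ∂μ ≤ C₁ := by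
    intro n s
    rw [← hC₁ n]
    exact setIntegral_le_integral ((hgint n).abs) (Filter.Eventually.of_forall fun z => abs_nonneg _)
  -- boundedness of the values at centers
  have hbound : ∀ (n : ℕ), ∀ x ∈ b', μ (B x) ≠ 0 →
      |g n x| ≤ ε' + C₁ / (μ (B x)).toReal := by
    intro n x hx hne
    have hc : 0 < (μ (B x)).toReal := ENNReal.toReal_pos hne (measure_ne_top μ _)
    have hxK : x ∈ K := hb'K hx
    have hpt : ∀ z ∈ B x, |g n x| ≤ ε' + |g n z| := by
      intro z hz
      have hzK : z ∈ K := hz.2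
      have hdist : dist x z < δ := by
        have h' : dist z x < δ / 2 := Metric.mem_ball.mp hz.1
        rw [dist_comm]; linarith
      have h1 := hδK x hxK z hzK hdist n
      have h2 : |g n x| - |g n z| ≤ |g n x - g n z| := abs_sub_abs_le_abs_sub _ _
      linarith
    have h2 : ∫ _ in B x, |g n x| ∂μ ≤ ∫ z in B x, (ε' + |g n z|) ∂μ := by
      refine setIntegral_mono_on (integrableOn_const)
        ((integrableOn_const).add
          ((hgint n).abs.integrableOn)) (hBmeas x) hpt
    rw [setIntegral_const] at h2
    have h3 : ∫ z in B x, (ε' + |g n z|) ∂μ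
        = (μ (B x)).toReal * ε' + ∫ z in B x, |g n z| ∂μ := by
      rw [integral_add (integrableOn_const (s := B x) (μ := μ) (C := ε'))
        ((hgint n).abs.integrableOn), setIntegral_const, smul_eq_mul, Measure.real]
    have h4 := hC₁nn n (B x)
    have h5 : (μ (B x)).toReal * |g n x| ≤ (μ (B x)).toReal * ε' + C₁ := by
      have h6 := h2.trans_eq h3
      simp only [smul_eq_mul, Measure.real] at h6
      linarith
    have h7 : (|g n x| - ε') * (μ (B x)).toReal ≤ C₁ := by nlinarith
    have h8 := (le_div_iff₀ hc).mpr h7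
    linarith
  -- vectors of center values
  set Φ : ℕ → ↥b' → ℝ := fun n i => if μ (B i.1) = 0 then 0 else g n i.1 with hΦdef
  set M : ↥b' → ℝ := fun i => ε' + max 0 (C₁ / (μ (B i.1)).toReal) with hMdef
  have hΦmem : ∀ n, Φ n ∈ Set.pi Set.univ (fun i => Set.Icc (-(M i)) (M i)) := by
    intro n
    intro i _
    rw [Set.mem_Icc, ← abs_le]
    by_cases h0 : μ (B i.1) = 0
    · simp only [hΦdef, if_pos h0, abs_zero, hMdef]
      positivity
    · simp only [hΦdef, if_neg h0, hMdef]
      calc |g n i.1| ≤ ε' + C₁ / (μ (B i.1)).toReal := hbound n i.1 i.2 h0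
        _ ≤ ε' + max 0 (C₁ / (μ (B i.1)).toReal) := by
            exact add_le_add_right (le_max_right _ _) _
  have htb : TotallyBounded (Set.range Φ) := by
    have hc : IsCompact (Set.pi Set.univ (fun i : ↥b' => Set.Icc (-(M i)) (M i))) :=
      isCompact_univ_pi (fun i => isCompact_Icc)
    exact hc.totallyBounded.subset (Set.range_subset_iff.2 hΦmem)
  obtain ⟨t, htsub, htfin, htcov⟩ :=
    totallyBounded_iff_subset.mp htb _ (Metric.dist_mem_uniformity hε')
  classical
  set pick : (↥b' → ℝ) → ℕ := fun y => if h : ∃ m, Φ m = y then h.choose else 0 with hpickdef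
  refine ⟨htfin.toFinset.image pick, fun n => ?_⟩
  obtain ⟨y, hyt, hdy⟩ := Set.mem_iUnion₂.1 (htcov (Set.mem_range_self n))
  have hyr : ∃ m, Φ m = y := htsub hyt
  set m : ℕ := pick y with hmdef
  have hm : Φ m = y := by
    simp only [hmdef, hpickdef, dif_pos hyr]
    exact hyr.choose_spec
  refine ⟨m, Finset.mem_image.2 ⟨y, htfin.mem_toFinset.2 hyt, rfl⟩, ?_⟩
  have hdxy : dist (Φ n) (Φ m) < ε' := by rw [hm]; exact hdy
  have hdist : ∀ i : ↥b', |g n i.1 - g m i.1| < ε' ∨ μ (B i.1) = 0 := by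
    intro i
    by_cases h0 : μ (B i.1) = 0
    · exact Or.inr h0
    · left
      have := (dist_le_pi_dist (Φ n) (Φ m) i).trans_lt hdxy
      simpa [hΦdef, if_neg h0, Real.dist_eq] using this
  -- null exceptional set
  set N : Set X := ⋃ x ∈ {x ∈ b' | μ (B x) = 0}, B x with hNdef
  have hNnull : μ N = 0 := by
    rw [measure_biUnion_null_iff ((hb'fin.subset (Set.sep_subset _ _)).countable)]
    exact fun x hx => hx.2
  have haeK : ∀ z ∈ K \ N, |g n z - g m z| ≤ 3 * ε' := by
    intro z hz
    obtain ⟨x, hxb, hzball⟩ := Set.mem_iUnion₂.1 (hb'cov hz.1)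
    have hBx : μ (B x) ≠ 0 := by
      intro h0
      exact hz.2 (Set.mem_biUnion ⟨hxb, h0⟩ ⟨hzball, hz.1⟩)
    have hxK : x ∈ K := hb'K hxb
    have hdzx : dist x z < δ := by
      have := Metric.mem_ball.mp hzball
      rw [dist_comm]; linarith
    have e1 := hδK x hxK z hz.1 hdzx n
    have e2 := hδK x hxK z hz.1 hdzx m
    have e3 : |g n x - g m x| < ε' := (hdist ⟨x, hxb⟩).resolve_right hBx
    have t1 : |g n z - g m z| ≤ |g n z - g n x| + |g n x - g m z| := abs_sub_le _ _ _
    have t2 : |g n x - g m z| ≤ |g n x - g m x| + |g m x - g m z| := abs_sub_le _ _ _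
    have e1' : |g n z - g n x| = |g n x - g n z| := abs_sub_comm _ _
    linarith [e1'.le]
  have hNae : ∀ᵐ z ∂μ, z ∉ N := measure_eq_zero_iff_ae_notMem.mp hNnull
  set h : X → ℝ := fun z => g n z - g m z with hhdef
  have hh : AEStronglyMeasurable h μ := (hgam n).sub (hgam m)
  have hsplit : h = K.indicator h + Kᶜ.indicator h := (Set.indicator_self_add_compl K h).symm
  have haK : eLpNorm (K.indicator h) 2 μ ≤ ENNReal.ofReal (3 * ε') := by
    have hae : ∀ᵐ z ∂μ, ‖K.indicator h z‖ ≤ 3 * ε' := by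
      filter_upwards [hNae] with z hzN
      by_cases hzK : z ∈ K
      · rw [Set.indicator_of_mem hzK, Real.norm_eq_abs]
        exact haeK z ⟨hzK, hzN⟩
      · rw [Set.indicator_of_notMem hzK, norm_zero]
        positivity
    calc eLpNorm (K.indicator h) 2 μ
        ≤ μ Set.univ ^ (2 : ℝ≥0∞).toReal⁻¹ * ENNReal.ofReal (3 * ε') :=
          eLpNorm_le_of_ae_bound hae
      _ = ENNReal.ofReal (3 * ε') := by simp
  have key : ∀ k : ℕ, eLpNorm (Kᶜ.indicator (g k)) 2 μ ≤ ENNReal.ofReal ε' := by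
    intro k
    set S : Set X := (⇑T)^[a k] '' Kᶜ with hSdef
    have hSpre : S = ((⇑T.symm)^[a k]) ⁻¹' Kᶜ := himg _ _
    have hSm : MeasurableSet S := by
      rw [hSpre]; exact (hmps (a k)).measurable hKmeas.compl
    have hμS : μ S ≤ ENNReal.ofReal δ₀ := by
      rw [hSpre, (hmps (a k)).measure_preimage hKmeas.compl.nullMeasurableSet]
      exact hKc
    have hrw : Kᶜ.indicator (g k) = (S.indicator f) ∘ ((⇑T)^[a k]) := by
      funext z
      by_cases hz : z ∈ Kᶜ
      · rw [Set.indicator_of_mem hz]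
        have hmem : (⇑T)^[a k] z ∈ S := Set.mem_image_of_mem _ hz
        simp only [Function.comp_apply, Set.indicator_of_mem hmem, hgdef]
      · rw [Set.indicator_of_notMem hz]
        have hnmem : (⇑T)^[a k] z ∉ S := by
          intro hmem
          rw [hSpre, Set.mem_preimage] at hmem
          have hz' : ((⇑T.symm)^[a k]) ((⇑T)^[a k] z) = z :=
            (Function.LeftInverse.iterate (fun x => T.symm_apply_apply x) (a k)) z
          rw [hz'] at hmem
          exact hz hmem
        simp only [Function.comp_apply, Set.indicator_of_notMem hnmem]
    rw [hrw, eLpNorm_comp_measurePreserving (hf.aestronglyMeasurable.indicator hSm) (hmp (a k))]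
    exact hδ₀ S hSm hμS
  have hbKc : eLpNorm (Kᶜ.indicator h) 2 μ ≤ ENNReal.ofReal ε' + ENNReal.ofReal ε' := by
    have hsub : Kᶜ.indicator h = fun z => Kᶜ.indicator (g n) z - Kᶜ.indicator (g m) z := by
      funext z
      by_cases hz : z ∈ Kᶜ <;>
        simp [Set.indicator_of_mem, Set.indicator_of_notMem, hz, hhdef]
    rw [hsub]
    calc eLpNorm (fun z => Kᶜ.indicator (g n) z - Kᶜ.indicator (g m) z) 2 μ
        ≤ eLpNorm (Kᶜ.indicator (g n)) 2 μ + eLpNorm (Kᶜ.indicator (g m)) 2 μ :=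
          eLpNorm_sub_le ((hgam n).indicator hKmeas.compl)
            ((hgam m).indicator hKmeas.compl) one_le_two
      _ ≤ _ := add_le_add (key n) (key m)
  have hfinal : eLpNorm h 2 μ
      ≤ ENNReal.ofReal (3 * ε') + (ENNReal.ofReal ε' + ENNReal.ofReal ε') := by
    calc eLpNorm h 2 μ = eLpNorm (K.indicator h + Kᶜ.indicator h) 2 μ := by rw [← hsplit]
      _ ≤ eLpNorm (K.indicator h) 2 μ + eLpNorm (Kᶜ.indicator h) 2 μ :=
          eLpNorm_add_le (hh.indicator hKmeas) (hh.indicator hKmeas.compl) one_le_two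
      _ ≤ _ := add_le_add haK hbKc
  have hlt : eLpNorm h 2 μ < ENNReal.ofReal ε := by
    refine hfinal.trans_lt ?_
    rw [← ENNReal.ofReal_add (by positivity) (by positivity),
      ← ENNReal.ofReal_add (by positivity) (by positivity)]
    exact (ENNReal.ofReal_lt_ofReal_iff hε).mpr (by rw [hε'def]; linarith)
  exact hlt
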